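/- There exists a satisfiable X_a-free Hyper²LTL sentence all of whose models have cardinality exactly 𝔠, and this holds both under standard semantics and under closed-world semantics; concretely, over AP = {+,−,s,x} the sentence φ_allSets constructed in the paper has the uncountable set T_allSets' = {{+}^n{x,+}{+}^ω | n∈ℕ} ∪ {{−}^n{x,−}{−}^ω | n∈ℕ} ∪ {(t(0)∪{s})(t(1)∪{s})(t(2)∪{s})⋯ | t ∈ (2^{{x}})^ω} as its unique model under both semantics. -/

import Mathlib

namespace Hyper2

/-! ### Traces -/

/-- A trace over atomic propositions `α` is an infinite word over `2^α`. -/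
abbrev Trace (α : Type) := ℕ → Set α

/-! ### Second-order (set) variables -/

/-- Second-order variables: the distinguished variable `all` (`Xₐ`, the set of all traces),
the distinguished variable `dis` (`X_d`, the universe of discourse), and named variables. -/
inductive SVar where
  | all : SVar
  | dis : SVar
  | var : ℕ → SVar
deriving DecidableEq

def SVar.code : SVar → ℕ
  | .all => 0
  | .dis => 1
  | .var n => n + 2

/-! ### Quantifier-free (LTL-like) formulas -/

/-- Quantifier-free formulas: atoms `a_π`, negation, disjunction, next, until. -/
inductive QF (α : Type) where
  | atom : α → ℕ → QF α
  | not : QF α → QF α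
  | or : QF α → QF α → QF α
  | next : QF α → QF α
  | untl : QF α → QF α → QF α

variable {α : Type}

/-- Satisfaction of a quantifier-free formula w.r.t. a valuation of trace
variables, at position `i`. -/
def QF.sat (v : ℕ → Trace α) : QF α → ℕ → Prop
  | .atom a π, i => a ∈ v π i
  | .not ψ, i => ¬ QF.sat v ψ i
  | .or ψ₁ ψ₂, i => QF.sat v ψ₁ i ∨ QF.sat v ψ₂ i
  | .next ψ, i => QF.sat v ψ (i + 1)
  | .untl ψ₁ ψ₂, i => ∃ j, i ≤ j ∧ QF.sat v ψ₂ j ∧ ∀ k, i ≤ k → k < j → QF.sat v ψ₁ k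

/-- The trace variables occurring in a quantifier-free formula. -/
def QF.traceVars : QF α → Set ℕ
  | .atom _ π => {π}
  | .not ψ => ψ.traceVars
  | .or ψ₁ ψ₂ => ψ₁.traceVars ∪ ψ₂.traceVars
  | .next ψ => ψ.traceVars
  | .untl ψ₁ ψ₂ => ψ₁.traceVars ∪ ψ₂.traceVars

/-- The atomic propositions occurring in a quantifier-free formula. -/
def QF.atoms : QF α → Set α
  | .atom a _ => {a}
  | .not ψ => ψ.atoms
  | .or ψ₁ ψ₂ => ψ₁.atoms ∪ ψ₂.atoms
  | .next ψ => ψ.atoms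
  | .untl ψ₁ ψ₂ => ψ₁.atoms ∪ ψ₂.atoms

/-- A numerical code for quantifier-free formulas over `AP = ℕ`. -/
def QF.code : QF ℕ → ℕ
  | .atom a π => Nat.pair 0 (Nat.pair a π)
  | .not ψ => Nat.pair 1 ψ.code
  | .or ψ₁ ψ₂ => Nat.pair 2 (Nat.pair ψ₁.code ψ₂.code)
  | .next ψ => Nat.pair 3 ψ.code
  | .untl ψ₁ ψ₂ => Nat.pair 4 (Nat.pair ψ₁.code ψ₂.code)

/-! ### Variable assignments -/

/-- A variable assignment maps trace variables to traces and
second-order variables to sets of traces. -/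
structure Assignment (α : Type) where
  tr : ℕ → Trace α
  so : SVar → Set (Trace α)

/-- Update the value of a trace variable. -/
def Assignment.updTr (Γ : Assignment α) (π : ℕ) (t : Trace α) : Assignment α :=
  { Γ with tr := Function.update Γ.tr π t }

/-- Update the value of a second-order variable. -/
def Assignment.updSo (Γ : Assignment α) (X : SVar) (T : Set (Trace α)) : Assignment α :=
  { Γ with so := Function.update Γ.so X T }

/-! ### Hyper²LTL -/

/-- Hyper²LTL formulas: a prefix of (unrestricted) second-order quantifiers and
trace quantifiers (ranging over a second-order variable), followed by a
quantifier-free formula. Second-order quantifiers bind named variables. -/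
inductive Formula (α : Type) where
  | qf : QF α → Formula α
  | existsSet : ℕ → Formula α → Formula α
  | forallSet : ℕ → Formula α → Formula α
  | existsTrace : ℕ → SVar → Formula α → Formula α
  | forallTrace : ℕ → SVar → Formula α → Formula α

/-- Standard semantics of Hyper²LTL: second-order quantifiers range over
arbitrary sets of traces. -/
def Formula.sat : Formula α → Assignment α → Prop
  | .qf ψ, Γ => ψ.sat Γ.tr 0
  | .existsSet X φ, Γ => ∃ T : Set (Trace α), Formula.sat φ (Γ.updSo (SVar.var X) T)
  | .forallSet X φ, Γ => ∀ T : Set (Trace α), Formula.sat φ (Γ.updSo (SVar.var X) T)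
  | .existsTrace π X φ, Γ => ∃ t ∈ Γ.so X, Formula.sat φ (Γ.updTr π t)
  | .forallTrace π X φ, Γ => ∀ t ∈ Γ.so X, Formula.sat φ (Γ.updTr π t)

/-- Closed-world semantics of Hyper²LTL: second-order quantifiers range only over
subsets of the universe of discourse `X_d`. -/
def Formula.satCW : Formula α → Assignment α → Prop
  | .qf ψ, Γ => ψ.sat Γ.tr 0
  | .existsSet X φ, Γ =>
      ∃ T : Set (Trace α), T ⊆ Γ.so SVar.dis ∧ Formula.satCW φ (Γ.updSo (SVar.var X) T)
  | .forallSet X φ, Γ =>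
      ∀ T : Set (Trace α), T ⊆ Γ.so SVar.dis → Formula.satCW φ (Γ.updSo (SVar.var X) T)
  | .existsTrace π X φ, Γ => ∃ t ∈ Γ.so X, Formula.satCW φ (Γ.updTr π t)
  | .forallTrace π X φ, Γ => ∀ t ∈ Γ.so X, Formula.satCW φ (Γ.updTr π t)

/-- Free trace variables of a Hyper²LTL formula. -/
def Formula.freeTraceVars : Formula α → Set ℕ
  | .qf ψ => ψ.traceVars
  | .existsSet _ φ => φ.freeTraceVars
  | .forallSet _ φ => φ.freeTraceVars
  | .existsTrace π _ φ => φ.freeTraceVars \ {π}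
  | .forallTrace π _ φ => φ.freeTraceVars \ {π}

/-- Free second-order variables of a Hyper²LTL formula. -/
def Formula.freeSetVars : Formula α → Set SVar
  | .qf _ => ∅
  | .existsSet X φ => φ.freeSetVars \ {SVar.var X}
  | .forallSet X φ => φ.freeSetVars \ {SVar.var X}
  | .existsTrace _ X φ => insert X φ.freeSetVars
  | .forallTrace _ X φ => insert X φ.freeSetVars

/-- A sentence is a formula in which only `Xₐ` and `X_d` may occur free. -/
def Formula.IsSentence (φ : Formula α) : Prop :=
  φ.freeTraceVars = ∅ ∧ φ.freeSetVars ⊆ {SVar.all, SVar.dis}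

/-- A formula is `Xₐ`-free if the distinguished variable `Xₐ` is not used. -/
def Formula.XaFree : Formula α → Prop
  | .qf _ => True
  | .existsSet _ φ => φ.XaFree
  | .forallSet _ φ => φ.XaFree
  | .existsTrace _ X φ => X ≠ SVar.all ∧ φ.XaFree
  | .forallTrace _ X φ => X ≠ SVar.all ∧ φ.XaFree

/-- A numerical code for Hyper²LTL formulas over `AP = ℕ`. -/
def Formula.code : Formula ℕ → ℕ
  | .qf ψ => Nat.pair 0 ψ.code
  | .existsSet X φ => Nat.pair 1 (Nat.pair X φ.code)
  | .forallSet X φ => Nat.pair 2 (Nat.pair X φ.code)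
  | .existsTrace π X φ => Nat.pair 3 (Nat.pair π (Nat.pair X.code φ.code))
  | .forallTrace π X φ => Nat.pair 4 (Nat.pair π (Nat.pair X.code φ.code))

/-- The initial assignment for evaluating sentences (standard semantics):
`Xₐ` is the set of all traces, `X_d` is the model `T`. -/
def initAssign (T : Set (Trace α)) : Assignment α :=
  ⟨fun _ => fun _ => ∅, fun X =>
    match X with
    | SVar.all => Set.univ
    | SVar.dis => T
    | SVar.var _ => ∅⟩

/-- The initial assignment for evaluating `Xₐ`-free sentences under
closed-world semantics: `X_d` is the model `T`. -/
def initAssignCW (T : Set (Trace α)) : Assignment α :=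
  ⟨fun _ => fun _ => ∅, fun X =>
    match X with
    | SVar.dis => T
    | _ => ∅⟩

/-- `T ⊨ φ`: the set of traces `T` is a model of `φ` (standard semantics). -/
def Models (T : Set (Trace α)) (φ : Formula α) : Prop := φ.sat (initAssign T)

/-- `T ⊨_cw φ`: the set of traces `T` satisfies `φ` under closed-world semantics. -/
def ModelsCW (T : Set (Trace α)) (φ : Formula α) : Prop := φ.satCW (initAssignCW T)

/-! ### Finite transition systems -/

/-- A finite transition system over `AP = ℕ`: vertices are `0, …, V-1`,
with an edge list, initial vertices, and a labeling of vertices by (finite)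
sets of atomic propositions. -/
structure TS where
  V : ℕ
  E : List (ℕ × ℕ)
  I : List ℕ
  label : List (List ℕ)

/-- Well-formedness of a transition system: edges and initial vertices are in range,
every vertex has an outgoing edge, and every vertex has a label. -/
def TS.WF (𝔗 : TS) : Prop :=
  (∀ e ∈ 𝔗.E, e.1 < 𝔗.V ∧ e.2 < 𝔗.V) ∧
  (∀ v, v < 𝔗.V → ∃ w, (v, w) ∈ 𝔗.E) ∧
  (∀ v ∈ 𝔗.I, v < 𝔗.V) ∧
  𝔗.label.length = 𝔗.V

/-- The label of a vertex, as a set of atomic propositions. -/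
def TS.labelSet (𝔗 : TS) (v : ℕ) : Set ℕ := {a | a ∈ 𝔗.label.getD v []}

/-- Paths through a transition system, starting in an initial vertex. -/
def TS.IsPath (𝔗 : TS) (ρ : ℕ → ℕ) : Prop :=
  ρ 0 ∈ 𝔗.I ∧ ∀ n, (ρ n, ρ (n + 1)) ∈ 𝔗.E

/-- The set of traces of a transition system. -/
def TS.traces (𝔗 : TS) : Set (Trace ℕ) :=
  {t | ∃ ρ : ℕ → ℕ, 𝔗.IsPath ρ ∧ t = fun n => 𝔗.labelSet (ρ n)}

/-- A numerical code for transition systems. -/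
def TS.code (𝔗 : TS) : ℕ :=
  Nat.pair 𝔗.V (Nat.pair (Encodable.encode 𝔗.E)
    (Nat.pair (Encodable.encode 𝔗.I) (Encodable.encode 𝔗.label)))

/-! ### Arithmetic of orders one, two and three -/

/-- First-order terms over the signature `(+, ·)`. -/
inductive Term3 where
  | var : ℕ → Term3
  | plus : Term3 → Term3 → Term3
  | times : Term3 → Term3 → Term3

def Term3.val (v : ℕ → ℕ) : Term3 → ℕ
  | .var x => v x
  | .plus t u => t.val v + u.val v
  | .times t u => t.val v * u.val v

def Term3.vars : Term3 → Set ℕ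
  | .var x => {x}
  | .plus t u => t.vars ∪ u.vars
  | .times t u => t.vars ∪ u.vars

def Term3.code : Term3 → ℕ
  | .var x => Nat.pair 0 x
  | .plus t u => Nat.pair 1 (Nat.pair t.code u.code)
  | .times t u => Nat.pair 2 (Nat.pair t.code u.code)

/-- Formulas of third-order arithmetic over the signature `(+, ·, <, ∈)`, with
quantification over natural numbers (type 0), sets of natural numbers (type 1),
and sets of sets of natural numbers (type 2). -/
inductive Form3 where
  | lt : Term3 → Term3 → Form3
  | mem1 : Term3 → ℕ → Form3
  | mem2 : ℕ → ℕ → Form3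
  | not : Form3 → Form3
  | or : Form3 → Form3 → Form3
  | ex0 : ℕ → Form3 → Form3
  | all0 : ℕ → Form3 → Form3
  | ex1 : ℕ → Form3 → Form3
  | all1 : ℕ → Form3 → Form3
  | ex2 : ℕ → Form3 → Form3
  | all2 : ℕ → Form3 → Form3

/-- Satisfaction of third-order arithmetic over the standard structure `(ℕ, +, ·, <, ∈)`,
w.r.t. valuations of first-, second- and third-order variables. -/
def Form3.Sat : (ℕ → ℕ) → (ℕ → Set ℕ) → (ℕ → Set (Set ℕ)) → Form3 → Prop
  | v0, _, _, .lt t u => t.val v0 < u.val v0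
  | v0, v1, _, .mem1 t X => t.val v0 ∈ v1 X
  | _, v1, v2, .mem2 X Y => v1 X ∈ v2 Y
  | v0, v1, v2, .not φ => ¬ Form3.Sat v0 v1 v2 φ
  | v0, v1, v2, .or φ ψ => Form3.Sat v0 v1 v2 φ ∨ Form3.Sat v0 v1 v2 ψ
  | v0, v1, v2, .ex0 x φ => ∃ n : ℕ, Form3.Sat (Function.update v0 x n) v1 v2 φ
  | v0, v1, v2, .all0 x φ => ∀ n : ℕ, Form3.Sat (Function.update v0 x n) v1 v2 φ
  | v0, v1, v2, .ex1 X φ => ∃ S : Set ℕ, Form3.Sat v0 (Function.update v1 X S) v2 φ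
  | v0, v1, v2, .all1 X φ => ∀ S : Set ℕ, Form3.Sat v0 (Function.update v1 X S) v2 φ
  | v0, v1, v2, .ex2 X φ => ∃ S : Set (Set ℕ), Form3.Sat v0 v1 (Function.update v2 X S) φ
  | v0, v1, v2, .all2 X φ => ∀ S : Set (Set ℕ), Form3.Sat v0 v1 (Function.update v2 X S) φ

def Form3.free0 : Form3 → Set ℕ
  | .lt t u => t.vars ∪ u.vars
  | .mem1 t _ => t.vars
  | .mem2 _ _ => ∅
  | .not φ => φ.free0
  | .or φ ψ => φ.free0 ∪ ψ.free0
  | .ex0 x φ => φ.free0 \ {x}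
  | .all0 x φ => φ.free0 \ {x}
  | .ex1 _ φ => φ.free0
  | .all1 _ φ => φ.free0
  | .ex2 _ φ => φ.free0
  | .all2 _ φ => φ.free0

def Form3.free1 : Form3 → Set ℕ
  | .lt _ _ => ∅
  | .mem1 _ X => {X}
  | .mem2 X _ => {X}
  | .not φ => φ.free1
  | .or φ ψ => φ.free1 ∪ ψ.free1
  | .ex0 _ φ => φ.free1
  | .all0 _ φ => φ.free1
  | .ex1 X φ => φ.free1 \ {X}
  | .all1 X φ => φ.free1 \ {X}
  | .ex2 _ φ => φ.free1
  | .all2 _ φ => φ.free1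

def Form3.free2 : Form3 → Set ℕ
  | .lt _ _ => ∅
  | .mem1 _ _ => ∅
  | .mem2 _ Y => {Y}
  | .not φ => φ.free2
  | .or φ ψ => φ.free2 ∪ ψ.free2
  | .ex0 _ φ => φ.free2
  | .all0 _ φ => φ.free2
  | .ex1 _ φ => φ.free2
  | .all1 _ φ => φ.free2
  | .ex2 X φ => φ.free2 \ {X}
  | .all2 X φ => φ.free2 \ {X}

/-- Sentences of (third-order) arithmetic: no free variables of any order. -/
def Form3.IsSentence (φ : Form3) : Prop :=
  φ.free0 = ∅ ∧ φ.free1 = ∅ ∧ φ.free2 = ∅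

/-- Truth of a formula of arithmetic in `(ℕ, +, ·, <, ∈)` (under default valuations;
for sentences the valuations are irrelevant). -/
def Form3.Holds (φ : Form3) : Prop :=
  φ.Sat (fun _ => 0) (fun _ => ∅) (fun _ => ∅)

/-- Formulas of second-order arithmetic: no third-order variables or quantifiers. -/
def Form3.SecondOrder : Form3 → Prop
  | .lt _ _ => True
  | .mem1 _ _ => True
  | .mem2 _ _ => False
  | .not φ => φ.SecondOrder
  | .or φ ψ => φ.SecondOrder ∧ ψ.SecondOrder
  | .ex0 _ φ => φ.SecondOrder
  | .all0 _ φ => φ.SecondOrder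
  | .ex1 _ φ => φ.SecondOrder
  | .all1 _ φ => φ.SecondOrder
  | .ex2 _ _ => False
  | .all2 _ _ => False

/-- First-order formulas: arbitrary quantification over numbers, no set quantifiers
(free second-order variables are allowed). -/
def Form3.FirstOrderMatrix : Form3 → Prop
  | .lt _ _ => True
  | .mem1 _ _ => True
  | .mem2 _ _ => False
  | .not φ => φ.FirstOrderMatrix
  | .or φ ψ => φ.FirstOrderMatrix ∧ ψ.FirstOrderMatrix
  | .ex0 _ φ => φ.FirstOrderMatrix
  | .all0 _ φ => φ.FirstOrderMatrix
  | .ex1 _ _ => False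
  | .all1 _ _ => False
  | .ex2 _ _ => False
  | .all2 _ _ => False

/-- Formulas with arbitrary quantification over type-0 and type-1 objects but no
third-order quantifiers (free third-order variables are allowed). -/
def Form3.NoThirdQuant : Form3 → Prop
  | .lt _ _ => True
  | .mem1 _ _ => True
  | .mem2 _ _ => True
  | .not φ => φ.NoThirdQuant
  | .or φ ψ => φ.NoThirdQuant ∧ ψ.NoThirdQuant
  | .ex0 _ φ => φ.NoThirdQuant
  | .all0 _ φ => φ.NoThirdQuant
  | .ex1 _ φ => φ.NoThirdQuant
  | .all1 _ φ => φ.NoThirdQuant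
  | .ex2 _ _ => False
  | .all2 _ _ => False

/-- Σ¹₁-formulas: a block of existential second-order quantifiers followed by a
first-order matrix. -/
inductive Form3.IsSigma11 : Form3 → Prop
  | base (φ : Form3) : φ.FirstOrderMatrix → Form3.IsSigma11 φ
  | step (X : ℕ) (φ : Form3) : Form3.IsSigma11 φ → Form3.IsSigma11 (Form3.ex1 X φ)

/-- Σ²₁-formulas: a block of existential third-order quantifiers followed by a matrix
with arbitrary type-0 and type-1 quantification. -/
inductive Form3.IsSigma21 : Form3 → Prop
  | base (φ : Form3) : φ.NoThirdQuant → Form3.IsSigma21 φ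
  | step (X : ℕ) (φ : Form3) : Form3.IsSigma21 φ → Form3.IsSigma21 (Form3.ex2 X φ)

/-- The class Σ¹₁ of sets of natural numbers. -/
def InSigma11 (A : Set ℕ) : Prop :=
  ∃ φ : Form3, φ.IsSigma11 ∧ φ.free0 ⊆ {0} ∧ φ.free1 = ∅ ∧ φ.free2 = ∅ ∧
    ∀ n : ℕ, n ∈ A ↔ φ.Sat (Function.update (fun _ => 0) 0 n) (fun _ => ∅) (fun _ => ∅)

/-- The class Σ²₁ of sets of natural numbers. -/
def InSigma21 (A : Set ℕ) : Prop :=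
  ∃ φ : Form3, φ.IsSigma21 ∧ φ.free0 ⊆ {0} ∧ φ.free1 = ∅ ∧ φ.free2 = ∅ ∧
    ∀ n : ℕ, n ∈ A ↔ φ.Sat (Function.update (fun _ => 0) 0 n) (fun _ => ∅) (fun _ => ∅)

def Form3.code : Form3 → ℕ
  | .lt t u => Nat.pair 0 (Nat.pair t.code u.code)
  | .mem1 t X => Nat.pair 1 (Nat.pair t.code X)
  | .mem2 X Y => Nat.pair 2 (Nat.pair X Y)
  | .not φ => Nat.pair 3 φ.code
  | .or φ ψ => Nat.pair 4 (Nat.pair φ.code ψ.code)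
  | .ex0 x φ => Nat.pair 5 (Nat.pair x φ.code)
  | .all0 x φ => Nat.pair 6 (Nat.pair x φ.code)
  | .ex1 X φ => Nat.pair 7 (Nat.pair X φ.code)
  | .all1 X φ => Nat.pair 8 (Nat.pair X φ.code)
  | .ex2 X φ => Nat.pair 9 (Nat.pair X φ.code)
  | .all2 X φ => Nat.pair 10 (Nat.pair X φ.code)

/-- The decision problem "truth in third-order arithmetic". -/
def ThirdOrderTruth : Set Form3 := {φ | φ.IsSentence ∧ φ.Holds}

/-- The decision problem "truth in second-order arithmetic". -/
def SecondOrderTruth : Set Form3 := {φ | φ.SecondOrder ∧ φ.IsSentence ∧ φ.Holds}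

/-! ### Polynomial-time reductions -/

/-- A function on natural numbers is polynomial-time computable if it is computable
in polynomial time by a two-stack Turing machine w.r.t. the standard binary encoding. -/
def PolyTimeComputable (f : ℕ → ℕ) : Prop :=
  Nonempty (Turing.TM2ComputableInPolyTime Computability.encodingNatBool.encode
    Computability.encodingNatBool.encode f)

/-- `A` many-one reduces to `B` in polynomial time (problem instances are coded
into `ℕ` via `cα`, `cβ`): there is a map `g` on instances, implemented by a
polynomial-time computable function on codes, such that `x ∈ A ↔ g x ∈ B`. -/
def PolyTimeReducible {σ τ : Type} (cα : σ → ℕ) (cβ : τ → ℕ) (A : Set σ) (B : Set τ) : Prop :=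
  ∃ (g : σ → τ) (f : ℕ → ℕ), PolyTimeComputable f ∧
    (∀ x, f (cα x) = cβ (g x)) ∧ ∀ x, x ∈ A ↔ g x ∈ B

/-- Two decision problems are polynomial-time equivalent if each reduces to the
other in polynomial time. -/
def PolyTimeEquivalent {σ τ : Type} (cα : σ → ℕ) (cβ : τ → ℕ) (A : Set σ) (B : Set τ) : Prop :=
  PolyTimeReducible cα cβ A B ∧ PolyTimeReducible cβ cα B A

/-! ### Hyper²LTL decision problems -/

def H2SAT : Set (Formula ℕ) := {φ | φ.IsSentence ∧ ∃ T : Set (Trace ℕ), Models T φ}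

def H2SATcw : Set (Formula ℕ) :=
  {φ | φ.IsSentence ∧ φ.XaFree ∧ ∃ T : Set (Trace ℕ), ModelsCW T φ}

def H2FinSAT : Set (Formula ℕ) := {φ | φ.IsSentence ∧ ∃ 𝔗 : TS, 𝔗.WF ∧ Models 𝔗.traces φ}

def H2FinSATcw : Set (Formula ℕ) :=
  {φ | φ.IsSentence ∧ φ.XaFree ∧ ∃ 𝔗 : TS, 𝔗.WF ∧ ModelsCW 𝔗.traces φ}

def H2MC : Set (TS × Formula ℕ) := {p | p.1.WF ∧ p.2.IsSentence ∧ Models p.1.traces p.2}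

def H2MCcw : Set (TS × Formula ℕ) :=
  {p | p.1.WF ∧ p.2.IsSentence ∧ p.2.XaFree ∧ ModelsCW p.1.traces p.2}

/-- Coding of model-checking instances. -/
def mcCode (p : TS × Formula ℕ) : ℕ := Nat.pair p.1.code p.2.code

/-! ### Hyper²LTL_mm : minimality/maximality-guarded second-order quantifiers -/

inductive MinMax where
  | min : MinMax
  | max : MinMax
deriving DecidableEq

def MinMax.code : MinMax → ℕ
  | .min => 0
  | .max => 1

/-- Hyper²LTL_mm formulas: second-order quantifiers are guarded and range over
minimal (⋎) resp. maximal (⋏) sets satisfying the guard. -/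
inductive MMFormula (α : Type) where
  | qf : QF α → MMFormula α
  | existsSetG : ℕ → MinMax → MMFormula α → MMFormula α → MMFormula α
  | forallSetG : ℕ → MinMax → MMFormula α → MMFormula α → MMFormula α
  | existsTrace : ℕ → SVar → MMFormula α → MMFormula α
  | forallTrace : ℕ → SVar → MMFormula α → MMFormula α

/-- Minimal/maximal solutions of a guard predicate (standard semantics). -/
def IsSol (P : Set (Trace α) → Prop) : MinMax → Set (Trace α) → Prop
  | .min, T => P T ∧ ∀ T', T' ⊂ T → ¬ P T'
  | .max, T => P T ∧ ∀ T', T ⊂ T' → ¬ P T'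

/-- Minimal/maximal solutions among subsets of the universe of discourse `D`
(closed-world semantics). -/
def IsSolCW (D : Set (Trace α)) (P : Set (Trace α) → Prop) : MinMax → Set (Trace α) → Prop
  | .min, T => T ⊆ D ∧ P T ∧ ∀ T', T' ⊂ T → ¬ P T'
  | .max, T => T ⊆ D ∧ P T ∧ ∀ T', T ⊂ T' → T' ⊆ D → ¬ P T'

/-- Standard semantics of Hyper²LTL_mm. -/
def MMFormula.sat : MMFormula α → Assignment α → Prop
  | .qf ψ, Γ => ψ.sat Γ.tr 0
  | .existsSetG X mm g b, Γ =>
      ∃ T, IsSol (fun T' => MMFormula.sat g (Γ.updSo (SVar.var X) T')) mm T ∧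
        MMFormula.sat b (Γ.updSo (SVar.var X) T)
  | .forallSetG X mm g b, Γ =>
      ∀ T, IsSol (fun T' => MMFormula.sat g (Γ.updSo (SVar.var X) T')) mm T →
        MMFormula.sat b (Γ.updSo (SVar.var X) T)
  | .existsTrace π X φ, Γ => ∃ t ∈ Γ.so X, MMFormula.sat φ (Γ.updTr π t)
  | .forallTrace π X φ, Γ => ∀ t ∈ Γ.so X, MMFormula.sat φ (Γ.updTr π t)

/-- Closed-world semantics of Hyper²LTL_mm. -/
def MMFormula.satCW : MMFormula α → Assignment α → Prop
  | .qf ψ, Γ => ψ.sat Γ.tr 0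
  | .existsSetG X mm g b, Γ =>
      ∃ T, IsSolCW (Γ.so SVar.dis) (fun T' => MMFormula.satCW g (Γ.updSo (SVar.var X) T')) mm T ∧
        MMFormula.satCW b (Γ.updSo (SVar.var X) T)
  | .forallSetG X mm g b, Γ =>
      ∀ T, IsSolCW (Γ.so SVar.dis) (fun T' => MMFormula.satCW g (Γ.updSo (SVar.var X) T')) mm T →
        MMFormula.satCW b (Γ.updSo (SVar.var X) T)
  | .existsTrace π X φ, Γ => ∃ t ∈ Γ.so X, MMFormula.satCW φ (Γ.updTr π t)
  | .forallTrace π X φ, Γ => ∀ t ∈ Γ.so X, MMFormula.satCW φ (Γ.updTr π t)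

def MMFormula.freeTraceVars : MMFormula α → Set ℕ
  | .qf ψ => ψ.traceVars
  | .existsSetG _ _ g b => g.freeTraceVars ∪ b.freeTraceVars
  | .forallSetG _ _ g b => g.freeTraceVars ∪ b.freeTraceVars
  | .existsTrace π _ φ => φ.freeTraceVars \ {π}
  | .forallTrace π _ φ => φ.freeTraceVars \ {π}

def MMFormula.freeSetVars : MMFormula α → Set SVar
  | .qf _ => ∅
  | .existsSetG X _ g b => (g.freeSetVars ∪ b.freeSetVars) \ {SVar.var X}
  | .forallSetG X _ g b => (g.freeSetVars ∪ b.freeSetVars) \ {SVar.var X}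
  | .existsTrace _ X φ => insert X φ.freeSetVars
  | .forallTrace _ X φ => insert X φ.freeSetVars

def MMFormula.IsSentence (φ : MMFormula α) : Prop :=
  φ.freeTraceVars = ∅ ∧ φ.freeSetVars ⊆ {SVar.all, SVar.dis}

def MMFormula.XaFree : MMFormula α → Prop
  | .qf _ => True
  | .existsSetG _ _ g b => g.XaFree ∧ b.XaFree
  | .forallSetG _ _ g b => g.XaFree ∧ b.XaFree
  | .existsTrace _ X φ => X ≠ SVar.all ∧ φ.XaFree
  | .forallTrace _ X φ => X ≠ SVar.all ∧ φ.XaFree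

/-- The fragment Hyper²LTL_mm^⋏: only maximality-guarded second-order quantifiers. -/
def MMFormula.OnlyMax : MMFormula α → Prop
  | .qf _ => True
  | .existsSetG _ mm g b => mm = MinMax.max ∧ g.OnlyMax ∧ b.OnlyMax
  | .forallSetG _ mm g b => mm = MinMax.max ∧ g.OnlyMax ∧ b.OnlyMax
  | .existsTrace _ _ φ => φ.OnlyMax
  | .forallTrace _ _ φ => φ.OnlyMax

/-- The fragment Hyper²LTL_mm^⋎: only minimality-guarded second-order quantifiers. -/
def MMFormula.OnlyMin : MMFormula α → Prop
  | .qf _ => True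
  | .existsSetG _ mm g b => mm = MinMax.min ∧ g.OnlyMin ∧ b.OnlyMin
  | .forallSetG _ mm g b => mm = MinMax.min ∧ g.OnlyMin ∧ b.OnlyMin
  | .existsTrace _ _ φ => φ.OnlyMin
  | .forallTrace _ _ φ => φ.OnlyMin

def MMFormula.atoms : MMFormula α → Set α
  | .qf ψ => ψ.atoms
  | .existsSetG _ _ g b => g.atoms ∪ b.atoms
  | .forallSetG _ _ g b => g.atoms ∪ b.atoms
  | .existsTrace _ _ φ => φ.atoms
  | .forallTrace _ _ φ => φ.atoms

def MMFormula.code : MMFormula ℕ → ℕ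
  | .qf ψ => Nat.pair 0 ψ.code
  | .existsSetG X mm g b => Nat.pair 1 (Nat.pair X (Nat.pair mm.code (Nat.pair g.code b.code)))
  | .forallSetG X mm g b => Nat.pair 2 (Nat.pair X (Nat.pair mm.code (Nat.pair g.code b.code)))
  | .existsTrace π X φ => Nat.pair 3 (Nat.pair π (Nat.pair X.code φ.code))
  | .forallTrace π X φ => Nat.pair 4 (Nat.pair π (Nat.pair X.code φ.code))

def MMModels (T : Set (Trace α)) (φ : MMFormula α) : Prop := φ.sat (initAssign T)

def MMModelsCW (T : Set (Trace α)) (φ : MMFormula α) : Prop := φ.satCW (initAssignCW T)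

/-! ### lfp-Hyper²LTL_mm : quantification over least fixed points -/

/-- A guard `φ^con = π̇₁ ▷ Y ∧ ⋯ ∧ π̇ₙ ▷ Y ∧ ∀π̈₁ ∈ Z₁.⋯∀π̈_{n'} ∈ Z_{n'}. (ψ^step → π̈_m ▷ Y)`
for a least-fixed-point second-order quantifier. -/
structure LfpGuard (α : Type) where
  nSeeds : ℕ
  seed : Fin nSeeds → ℕ
  nUniv : ℕ
  univVar : Fin nUniv → ℕ
  univRange : Fin nUniv → SVar
  target : Fin nUniv
  step : QF α

/-- The monotone operator on sets of traces induced by a guard (for the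
second-order variable `Y`, w.r.t. the assignment `Γ`). -/
def LfpGuard.op (g : LfpGuard α) (Y : ℕ) (Γ : Assignment α) (S : Set (Trace α)) :
    Set (Trace α) :=
  S ∪ {t | ∃ i : Fin g.nSeeds, t = Γ.tr (g.seed i)} ∪
    {t | ∃ ts : Fin g.nUniv → Trace α,
      (∀ i, ts i ∈ (if g.univRange i = SVar.var Y then S else Γ.so (g.univRange i))) ∧
      g.step.sat
        ((List.ofFn fun i => (g.univVar i, ts i)).foldr
          (fun p w => Function.update w p.1 p.2) Γ.tr) 0 ∧
      t = ts g.target}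

/-- The least fixed point of the operator induced by a guard. -/
def LfpGuard.lfp (g : LfpGuard α) (Y : ℕ) (Γ : Assignment α) : Set (Trace α) :=
  ⋃ n : ℕ, (g.op Y Γ)^[n] ∅

/-- The trace variables occurring free in a guard. -/
def LfpGuard.freeTraceVars (g : LfpGuard α) : Set ℕ :=
  {π | ∃ i, g.seed i = π} ∪ (g.step.traceVars \ {π | ∃ i, g.univVar i = π})

def LfpGuard.code (g : LfpGuard ℕ) : ℕ :=
  Nat.pair (Encodable.encode (List.ofFn g.seed))
    (Nat.pair (Encodable.encode (List.ofFn g.univVar))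
      (Nat.pair (Encodable.encode (List.ofFn fun i => SVar.code (g.univRange i)))
        (Nat.pair g.target.val g.step.code)))

/-- lfp-Hyper²LTL_mm formulas: blocks of trace quantifiers and least-fixed-point
second-order quantifiers, followed by a quantifier-free formula. (Since every guard has
a unique minimal solution, existential and universal second-order quantification
coincide and are represented by the single constructor `fix`.) -/
inductive LfpFormula (α : Type) where
  | qf : QF α → LfpFormula α
  | existsTrace : ℕ → SVar → LfpFormula α → LfpFormula α
  | forallTrace : ℕ → SVar → LfpFormula α → LfpFormula α
  | fix : ℕ → LfpGuard α → LfpFormula α → LfpFormula α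

def LfpFormula.sat : LfpFormula α → Assignment α → Prop
  | .qf ψ, Γ => ψ.sat Γ.tr 0
  | .existsTrace π X φ, Γ => ∃ t ∈ Γ.so X, LfpFormula.sat φ (Γ.updTr π t)
  | .forallTrace π X φ, Γ => ∀ t ∈ Γ.so X, LfpFormula.sat φ (Γ.updTr π t)
  | .fix Y g φ, Γ => LfpFormula.sat φ (Γ.updSo (SVar.var Y) (g.lfp Y Γ))

/-- Scoping: trace quantifiers and guards only refer to second-order variables that are
in scope (`Xₐ`, `X_d`, and the previously introduced fixed-point variables). -/
def LfpFormula.ScopeOK : LfpFormula α → Set SVar → Prop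
  | .qf _, _ => True
  | .existsTrace _ X φ, A => X ∈ A ∧ LfpFormula.ScopeOK φ A
  | .forallTrace _ X φ, A => X ∈ A ∧ LfpFormula.ScopeOK φ A
  | .fix Y g φ, A => (∀ i, g.univRange i ∈ insert (SVar.var Y) A) ∧
      LfpFormula.ScopeOK φ (insert (SVar.var Y) A)

def LfpFormula.freeTraceVars : LfpFormula α → Set ℕ
  | .qf ψ => ψ.traceVars
  | .existsTrace π _ φ => φ.freeTraceVars \ {π}
  | .forallTrace π _ φ => φ.freeTraceVars \ {π}
  | .fix _ g φ => g.freeTraceVars ∪ φ.freeTraceVars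

def LfpFormula.IsSentence (φ : LfpFormula α) : Prop :=
  φ.freeTraceVars = ∅ ∧ φ.ScopeOK {SVar.all, SVar.dis}

def LfpFormula.XaFree : LfpFormula α → Prop
  | .qf _ => True
  | .existsTrace _ X φ => X ≠ SVar.all ∧ φ.XaFree
  | .forallTrace _ X φ => X ≠ SVar.all ∧ φ.XaFree
  | .fix _ g φ => (∀ i, g.univRange i ≠ SVar.all) ∧ φ.XaFree

def LfpFormula.code : LfpFormula ℕ → ℕ
  | .qf ψ => Nat.pair 0 ψ.code
  | .existsTrace π X φ => Nat.pair 1 (Nat.pair π (Nat.pair X.code φ.code))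
  | .forallTrace π X φ => Nat.pair 2 (Nat.pair π (Nat.pair X.code φ.code))
  | .fix Y g φ => Nat.pair 3 (Nat.pair Y (Nat.pair g.code φ.code))

def LfpModels (T : Set (Trace α)) (φ : LfpFormula α) : Prop := φ.sat (initAssign T)


/-- The atomic propositions `{+, −, s, x}`. -/
abbrev AP4 := Fin 4

def pP : AP4 := 0
def mP : AP4 := 1
def sP : AP4 := 2
def xP : AP4 := 3

/-- The trace `{a}ⁿ {x, a} {a}^ω`. -/
def spikeTrace (a : AP4) (n : ℕ) : Trace AP4 :=
  fun k => if k = n then {xP, a} else {a}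

/-- The unique model of `φ_allSets`:
`{{+}ⁿ{x,+}{+}^ω | n ∈ ℕ} ∪ {{−}ⁿ{x,−}{−}^ω | n ∈ ℕ} ∪
{(t(0)∪{s})(t(1)∪{s})⋯ | t ∈ (2^{x})^ω}`. -/
def TallSets13 : Set (Trace AP4) :=
  {t | ∃ n, t = spikeTrace pP n} ∪ {t | ∃ n, t = spikeTrace mP n} ∪
    {t | ∀ k, t k = {sP} ∨ t k = {sP, xP}}



/-! ### basic facts about AP4 sets and spikes -/

@[simp] lemma pP_ne_mP : pP ≠ mP := by decide
@[simp] lemma pP_ne_sP : pP ≠ sP := by decide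
@[simp] lemma pP_ne_xP : pP ≠ xP := by decide
@[simp] lemma mP_ne_pP : mP ≠ pP := by decide
@[simp] lemma mP_ne_sP : mP ≠ sP := by decide
@[simp] lemma mP_ne_xP : mP ≠ xP := by decide
@[simp] lemma sP_ne_pP : sP ≠ pP := by decide
@[simp] lemma sP_ne_mP : sP ≠ mP := by decide
@[simp] lemma sP_ne_xP : sP ≠ xP := by decide
@[simp] lemma xP_ne_pP : xP ≠ pP := by decide
@[simp] lemma xP_ne_mP : xP ≠ mP := by decide
@[simp] lemma xP_ne_sP : xP ≠ sP := by decide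

lemma ap4_set_ext {S S' : Set AP4} (h0 : pP ∈ S ↔ pP ∈ S') (h1 : mP ∈ S ↔ mP ∈ S')
    (h2 : sP ∈ S ↔ sP ∈ S') (h3 : xP ∈ S ↔ xP ∈ S') : S = S' := by
  ext a
  fin_cases a
  exacts [h0, h1, h2, h3]

lemma mem_spike {b a : AP4} {n k : ℕ} :
    b ∈ spikeTrace a n k ↔ b = a ∨ (k = n ∧ b = xP) := by
  unfold spikeTrace
  split_ifs with h <;> simp [h] <;> tauto

@[simp] lemma pP_mem_spikeP {n k : ℕ} : pP ∈ spikeTrace pP n k := by simp [mem_spike]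
@[simp] lemma mP_mem_spikeM {n k : ℕ} : mP ∈ spikeTrace mP n k := by simp [mem_spike]
@[simp] lemma mP_not_mem_spikeP {n k : ℕ} : mP ∉ spikeTrace pP n k := by
  simp [mem_spike, show mP ≠ pP from by decide, show mP ≠ xP from by decide]
@[simp] lemma pP_not_mem_spikeM {n k : ℕ} : pP ∉ spikeTrace mP n k := by
  simp [mem_spike, show pP ≠ mP from by decide, show pP ≠ xP from by decide]
@[simp] lemma sP_not_mem_spikeP {n k : ℕ} : sP ∉ spikeTrace pP n k := by
  simp [mem_spike, show sP ≠ pP from by decide, show sP ≠ xP from by decide]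
@[simp] lemma sP_not_mem_spikeM {n k : ℕ} : sP ∉ spikeTrace mP n k := by
  simp [mem_spike, show sP ≠ mP from by decide, show sP ≠ xP from by decide]
@[simp] lemma xP_mem_spikeP {n k : ℕ} : xP ∈ spikeTrace pP n k ↔ k = n := by
  simp [mem_spike, show xP ≠ pP from by decide]
@[simp] lemma xP_mem_spikeM {n k : ℕ} : xP ∈ spikeTrace mP n k ↔ k = n := by
  simp [mem_spike, show xP ≠ mP from by decide]


@[simp] lemma pP_not_mem_sS : pP ∉ ({sP} : Set AP4) := by
  simp [show pP ≠ sP from by decide]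
@[simp] lemma mP_not_mem_sS : mP ∉ ({sP} : Set AP4) := by
  simp [show mP ≠ sP from by decide]
@[simp] lemma xP_not_mem_sS : xP ∉ ({sP} : Set AP4) := by
  simp [show xP ≠ sP from by decide]
@[simp] lemma sP_mem_sS : sP ∈ ({sP} : Set AP4) := rfl
@[simp] lemma pP_not_mem_sxS : pP ∉ ({sP, xP} : Set AP4) := by
  simp [show pP ≠ sP from by decide, show pP ≠ xP from by decide]
@[simp] lemma mP_not_mem_sxS : mP ∉ ({sP, xP} : Set AP4) := by
  simp [show mP ≠ sP from by decide, show mP ≠ xP from by decide]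
@[simp] lemma xP_mem_sxS : xP ∈ ({sP, xP} : Set AP4) := by simp
@[simp] lemma sP_mem_sxS : sP ∈ ({sP, xP} : Set AP4) := by simp

/-! ### QF combinators -/

def tt : QF AP4 := .or (.atom pP 0) (.not (.atom pP 0))
def qand (a b : QF AP4) : QF AP4 := .not (.or (.not a) (.not b))
def qimp (a b : QF AP4) : QF AP4 := .or (.not a) b
def qF (a : QF AP4) : QF AP4 := .untl tt a
def qG (a : QF AP4) : QF AP4 := .not (qF (.not a))

variable {v : ℕ → Trace AP4} {i : ℕ}

@[simp] lemma sat_not {a : QF AP4} : QF.sat v (.not a) i ↔ ¬ QF.sat v a i := Iff.rfl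
@[simp] lemma sat_or {a b : QF AP4} :
    QF.sat v (.or a b) i ↔ QF.sat v a i ∨ QF.sat v b i := Iff.rfl
@[simp] lemma sat_next {a : QF AP4} : QF.sat v (.next a) i ↔ QF.sat v a (i + 1) := Iff.rfl
@[simp] lemma sat_atom {a : AP4} {p : ℕ} : QF.sat v (.atom a p) i ↔ a ∈ v p i := Iff.rfl

@[simp] lemma sat_tt : QF.sat v tt i := by
  by_cases h : pP ∈ v 0 i <;> simp [tt, QF.sat, h]

@[simp] lemma sat_qand {a b : QF AP4} :
    QF.sat v (qand a b) i ↔ QF.sat v a i ∧ QF.sat v b i := by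
  simp [qand, sat_not, sat_or]

@[simp] lemma sat_qimp {a b : QF AP4} :
    QF.sat v (qimp a b) i ↔ (QF.sat v a i → QF.sat v b i) := by
  simp [qimp, sat_not, sat_or]; tauto

@[simp] lemma sat_qF {a : QF AP4} :
    QF.sat v (qF a) i ↔ ∃ j, i ≤ j ∧ QF.sat v a j := by
  constructor
  · rintro ⟨j, hj, ha, -⟩; exact ⟨j, hj, ha⟩
  · rintro ⟨j, hj, ha⟩; exact ⟨j, hj, ha, fun _ _ _ => sat_tt⟩

@[simp] lemma sat_qG {a : QF AP4} :
    QF.sat v (qG a) i ↔ ∀ j, i ≤ j → QF.sat v a j := by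
  show ¬ _ ↔ _
  rw [sat_qF]
  push_neg
  simp only [sat_not, not_not]


/-! ### shape formulas -/

def oneX (p : ℕ) : QF AP4 :=
  qand (qF (.atom xP p)) (qG (qimp (.atom xP p) (.next (qG (.not (.atom xP p))))))

def shP (p : ℕ) : QF AP4 :=
  qand (qG (qand (.atom pP p) (qand (.not (.atom mP p)) (.not (.atom sP p))))) (oneX p)

def shM (p : ℕ) : QF AP4 :=
  qand (qG (qand (.atom mP p) (qand (.not (.atom pP p)) (.not (.atom sP p))))) (oneX p)

def shS (p : ℕ) : QF AP4 :=
  qG (qand (.atom sP p) (qand (.not (.atom pP p)) (.not (.atom mP p))))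

def sh (p : ℕ) : QF AP4 := .or (shP p) (shM p)

def shapeF (p : ℕ) : QF AP4 := .or (sh p) (shS p)

def IsS (t : Trace AP4) : Prop := ∀ k, t k = {sP} ∨ t k = {sP, xP}

def IsSpike (t : Trace AP4) : Prop :=
  (∃ n, t = spikeTrace pP n) ∨ (∃ n, t = spikeTrace mP n)

def ShapeP (t : Trace AP4) : Prop := IsSpike t ∨ IsS t

lemma mem_tall {t : Trace AP4} : t ∈ TallSets13 ↔ ShapeP t := by
  show (t ∈ _ ∪ _ ∪ _) ↔ _
  rw [Set.mem_union, Set.mem_union]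
  show (_ ∨ _) ∨ _ ↔ (_ ∨ _) ∨ _
  exact Iff.rfl


lemma sat_spike_aux {t : Trace AP4} (a : AP4) (hax : a ≠ xP)
    (hG : ∀ k, a ∈ t k) (hG2 : ∀ k b, b ∈ t k → b = a ∨ b = xP)
    (hF : ∃ n, xP ∈ t n) (hU : ∀ j, xP ∈ t j → ∀ k, j < k → xP ∉ t k) :
    ∃ n, t = spikeTrace a n := by
  obtain ⟨n, hn⟩ := hF
  have key : ∀ k, xP ∈ t k → k = n := by
    intro k hk
    rcases lt_trichotomy k n with h | h | h
    · exact absurd hn (hU k hk n h)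
    · exact h
    · exact absurd hk (hU n hn k h)
  refine ⟨n, funext fun k => ?_⟩
  show t k = if k = n then {xP, a} else {a}
  split_ifs with h
  · subst h
    ext b
    constructor
    · intro hb; rcases hG2 k b hb with rfl | rfl <;> simp
    · intro hb
      rcases hb with rfl | rfl
      exacts [hn, hG k]
  · ext b
    constructor
    · intro hb
      rcases hG2 k b hb with rfl | rfl
      · rfl
      · exact absurd (key k hb) h
    · rintro rfl; exact hG k

lemma sat_shP (p : ℕ) : QF.sat v (shP p) 0 ↔ ∃ n, v p = spikeTrace pP n := by
  simp only [shP, oneX, sat_qand, sat_qG, sat_qimp, sat_qF, sat_not, sat_next, sat_atom]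
  constructor
  · rintro ⟨hG, ⟨j, -, hj⟩, hU⟩
    refine sat_spike_aux pP (by decide) (fun k => (hG k k.zero_le).1)
      (fun k b hb => ?_) ⟨j, hj⟩
      (fun j hj k hk => by
        have := hU j j.zero_le hj k hk
        simpa using this)
    have h := hG k k.zero_le
    fin_cases b
    · exact .inl rfl
    · exact absurd hb h.2.1
    · exact absurd hb h.2.2
    · exact .inr rfl
  · rintro ⟨n, hn⟩
    simp only [hn]
    refine ⟨fun j _ => by simp, ⟨n, n.zero_le, by simp⟩, fun j _ hj k hk => by simp at hj ⊢; omega⟩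

lemma sat_shM (p : ℕ) : QF.sat v (shM p) 0 ↔ ∃ n, v p = spikeTrace mP n := by
  simp only [shM, oneX, sat_qand, sat_qG, sat_qimp, sat_qF, sat_not, sat_next, sat_atom]
  constructor
  · rintro ⟨hG, ⟨j, -, hj⟩, hU⟩
    refine sat_spike_aux mP (by decide) (fun k => (hG k k.zero_le).1)
      (fun k b hb => ?_) ⟨j, hj⟩
      (fun j hj k hk => by
        have := hU j j.zero_le hj k hk
        simpa using this)
    have h := hG k k.zero_le
    fin_cases b
    · exact absurd hb h.2.1
    · exact .inl rfl
    · exact absurd hb h.2.2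
    · exact .inr rfl
  · rintro ⟨n, hn⟩
    simp only [hn]
    refine ⟨fun j _ => by simp, ⟨n, n.zero_le, by simp⟩, fun j _ hj k hk => by simp at hj ⊢; omega⟩

lemma sat_shS (p : ℕ) : QF.sat v (shS p) 0 ↔ IsS (v p) := by
  simp only [shS, sat_qG, sat_qand, sat_not, sat_atom]
  constructor
  · intro h k
    obtain ⟨hs, hp, hm⟩ := h k k.zero_le
    by_cases hx : xP ∈ v p k
    · exact .inr (ap4_set_ext (by simp [hp] <;> decide) (by simp [hm] <;> decide)
        (by simp [hs] <;> decide) (by simp [hx] <;> decide))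
    · exact .inl (ap4_set_ext (by simp [hp] <;> decide) (by simp [hm] <;> decide)
        (by simp [hs] <;> decide) (by simp [hx] <;> decide))
  · intro h j _
    rcases h j with hj | hj <;> rw [hj] <;> simp <;> decide

lemma sat_sh (p : ℕ) : QF.sat v (sh p) 0 ↔ IsSpike (v p) := by
  show QF.sat v (shP p) 0 ∨ QF.sat v (shM p) 0 ↔ _
  rw [sat_shP, sat_shM]; rfl

lemma sat_shapeF (p : ℕ) : QF.sat v (shapeF p) 0 ↔ ShapeP (v p) := by
  show QF.sat v (sh p) 0 ∨ QF.sat v (shS p) 0 ↔ _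
  rw [sat_sh, sat_shS]; rfl


/-! ### the matrix and the sentence -/

/-- `F (x_p ∧ X x_q)` : the spike of `q` is one position after a spike of `p`. -/
def fstep (p q : ℕ) : QF AP4 := qF (qand (.atom xP p) (.next (.atom xP q)))

def baseF (a : AP4) (p : ℕ) : QF AP4 := qand (.atom a p) (.atom xP p)

def succF : QF AP4 :=
  qand (qimp (.atom pP 2) (qand (.atom pP 3) (fstep 2 3)))
    (qimp (.atom mP 2) (qand (.atom mP 3) (fstep 2 3)))

def badF : QF AP4 :=
  qand (sh 5) (qand (sh 6)
    (qand (qF (qand (.atom xP 5) (.atom xP 6))) (qand (.atom pP 5) (.atom mP 6))))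

def matchF : QF AP4 :=
  qand (.atom sP 7) (qimp (sh 8)
    (qand (qimp (.atom pP 8) (qG (qimp (.atom xP 8) (.atom xP 7))))
      (qimp (.atom mP 8) (qG (qimp (.atom xP 8) (.not (.atom xP 7)))))))

def matF : QF AP4 :=
  qand (baseF pP 0) (qand (baseF mP 1) (qand (shapeF 2) (qand succF (.or badF matchF))))

/-- The sentence `φ_allSets`. -/
def phi : Formula AP4 :=
  .existsTrace 0 .dis <| .existsTrace 1 .dis <| .forallTrace 2 .dis <| .existsTrace 3 .dis <|
    .forallSet 0 <| .forallTrace 4 (.var 0) <| .existsTrace 5 (.var 0) <|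
      .existsTrace 6 (.var 0) <| .existsTrace 7 .dis <| .forallTrace 8 (.var 0) <| .qf matF

/-! ### semantic counterparts -/

def SuccP (t2 t3 : Trace AP4) : Prop :=
  (pP ∈ t2 0 → pP ∈ t3 0 ∧ ∃ j, xP ∈ t2 j ∧ xP ∈ t3 (j + 1)) ∧
    (mP ∈ t2 0 → mP ∈ t3 0 ∧ ∃ j, xP ∈ t2 j ∧ xP ∈ t3 (j + 1))

def BadP (t5 t6 : Trace AP4) : Prop :=
  IsSpike t5 ∧ IsSpike t6 ∧ (∃ j, xP ∈ t5 j ∧ xP ∈ t6 j) ∧ pP ∈ t5 0 ∧ mP ∈ t6 0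

def MatchP (t7 t8 : Trace AP4) : Prop :=
  sP ∈ t7 0 ∧ (IsSpike t8 →
    (pP ∈ t8 0 → ∀ j, xP ∈ t8 j → xP ∈ t7 j) ∧
      (mP ∈ t8 0 → ∀ j, xP ∈ t8 j → xP ∉ t7 j))

def MatP (t0 t1 t2 t3 t5 t6 t7 t8 : Trace AP4) : Prop :=
  (pP ∈ t0 0 ∧ xP ∈ t0 0) ∧ (mP ∈ t1 0 ∧ xP ∈ t1 0) ∧ ShapeP t2 ∧ SuccP t2 t3 ∧
    (BadP t5 t6 ∨ MatchP t7 t8)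

lemma sat_fstep {p q : ℕ} :
    QF.sat v (fstep p q) 0 ↔ ∃ j, xP ∈ v p j ∧ xP ∈ v q (j + 1) := by
  simp [fstep]

lemma sat_succF : QF.sat v succF 0 ↔ SuccP (v 2) (v 3) := by
  simp [succF, SuccP, sat_fstep]

lemma sat_badF : QF.sat v badF 0 ↔ BadP (v 5) (v 6) := by
  simp [badF, BadP, sat_sh, and_assoc]

lemma sat_matchF : QF.sat v matchF 0 ↔ MatchP (v 7) (v 8) := by
  simp [matchF, MatchP, sat_sh]

lemma sat_matF :
    QF.sat v matF 0 ↔ MatP (v 0) (v 1) (v 2) (v 3) (v 5) (v 6) (v 7) (v 8) := by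
  simp only [matF, baseF, sat_qand, sat_or, sat_atom, sat_shapeF, sat_succF, sat_badF,
    sat_matchF, MatP]


/-! ### unfolding the semantics -/

def SatQ (Q : Set (Set (Trace AP4))) (T : Set (Trace AP4)) : Prop :=
  ∃ t0 ∈ T, ∃ t1 ∈ T, ∀ t2 ∈ T, ∃ t3 ∈ T, ∀ Xs ∈ Q, ∀ _t4 ∈ Xs, ∃ t5 ∈ Xs, ∃ t6 ∈ Xs,
    ∃ t7 ∈ T, ∀ t8 ∈ Xs, MatP t0 t1 t2 t3 t5 t6 t7 t8

lemma models_iff {T : Set (Trace AP4)} : Models T phi ↔ SatQ Set.univ T := by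
  simp only [Models, phi, Formula.sat, initAssign, Assignment.updTr, Assignment.updSo,
    sat_matF, SatQ, Set.mem_univ, true_implies, forall_const]
  simp [Function.update, SatQ]

lemma modelsCW_iff {T : Set (Trace AP4)} : ModelsCW T phi ↔ SatQ {X | X ⊆ T} T := by
  simp only [ModelsCW, phi, Formula.satCW, initAssignCW, Assignment.updTr, Assignment.updSo,
    sat_matF, SatQ]
  simp [Function.update, SatQ]


/-! ### shape helpers -/

lemma shape_pP {t : Trace AP4} (h : ShapeP t) (hp : pP ∈ t 0) : ∃ n, t = spikeTrace pP n := by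
  rcases h with (h | ⟨n, rfl⟩) | hS
  · exact h
  · simp at hp
  · rcases hS 0 with h0 | h0 <;> rw [h0] at hp <;> simp at hp

lemma shape_mP {t : Trace AP4} (h : ShapeP t) (hm : mP ∈ t 0) : ∃ n, t = spikeTrace mP n := by
  rcases h with (⟨n, rfl⟩ | h) | hS
  · simp at hm
  · exact h
  · rcases hS 0 with h0 | h0 <;> rw [h0] at hm <;> simp at hm

lemma shape_sP {t : Trace AP4} (h : ShapeP t) (hs : sP ∈ t 0) : IsS t := by
  rcases h with (⟨n, rfl⟩ | ⟨n, rfl⟩) | hS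
  · simp at hs
  · simp at hs
  · exact hS

/-! ### `TallSets13` satisfies the sentence -/

lemma satQ_tall (Q : Set (Set (Trace AP4))) : SatQ Q TallSets13 := by
  classical
  have hspP : ∀ n, spikeTrace pP n ∈ TallSets13 := fun n => mem_tall.2 (.inl (.inl ⟨n, rfl⟩))
  have hspM : ∀ n, spikeTrace mP n ∈ TallSets13 := fun n => mem_tall.2 (.inl (.inr ⟨n, rfl⟩))
  refine ⟨spikeTrace pP 0, hspP 0, spikeTrace mP 0, hspM 0, ?_⟩
  intro t2 ht2
  have hs2 := mem_tall.1 ht2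
  have hsucc : ∃ t3 ∈ TallSets13, SuccP t2 t3 := by
    rcases hs2 with (⟨n, rfl⟩ | ⟨n, rfl⟩) | hS
    · exact ⟨spikeTrace pP (n + 1), hspP _,
        fun _ => ⟨pP_mem_spikeP, n, by simp⟩, fun h => absurd h (by simp)⟩
    · exact ⟨spikeTrace mP (n + 1), hspM _,
        fun h => absurd h (by simp), fun _ => ⟨mP_mem_spikeM, n, by simp⟩⟩
    · refine ⟨spikeTrace pP 0, hspP 0, fun h => ?_, fun h => ?_⟩
      · rcases hS 0 with h0 | h0 <;> rw [h0] at h <;> simp at h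
      · rcases hS 0 with h0 | h0 <;> rw [h0] at h <;> simp at h
  obtain ⟨t3, ht3, hS23⟩ := hsucc
  refine ⟨t3, ht3, ?_⟩
  intro Xs _ t4 ht4
  have hbase : (pP ∈ spikeTrace pP 0 0 ∧ xP ∈ spikeTrace pP 0 0) ∧
      mP ∈ spikeTrace mP 0 0 ∧ xP ∈ spikeTrace mP 0 0 :=
    ⟨⟨pP_mem_spikeP, by simp⟩, mP_mem_spikeM, by simp⟩
  by_cases hbad : ∃ t5 ∈ Xs, ∃ t6 ∈ Xs, BadP t5 t6
  · obtain ⟨t5, h5, t6, h6, hb⟩ := hbad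
    exact ⟨t5, h5, t6, h6, spikeTrace pP 0, hspP 0, fun t8 _ =>
      ⟨hbase.1, hbase.2, hs2, hS23, .inl hb⟩⟩
  · refine ⟨t4, ht4, t4, ht4,
      (fun k => if spikeTrace pP k ∈ Xs then ({sP, xP} : Set AP4) else {sP}), ?_, ?_⟩
    · exact mem_tall.2 (.inr fun k => by
        by_cases h : spikeTrace pP k ∈ Xs <;> simp [h])
    · intro t8 h8
      refine ⟨hbase.1, hbase.2, hs2, hS23, .inr ⟨?_, ?_⟩⟩
      · by_cases h : spikeTrace pP 0 ∈ Xs <;> simp [h]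
      · intro hsp8
        constructor
        · intro hp8 j hx8
          rcases hsp8 with ⟨m, rfl⟩ | ⟨m, rfl⟩
          · have hj : j = m := by simpa using hx8
            subst hj
            simp [h8]
          · exact absurd hp8 (by simp)
        · intro hm8 j hx8
          rcases hsp8 with ⟨m, rfl⟩ | ⟨m, rfl⟩
          · exact absurd hm8 (by simp)
          · have hj : j = m := by simpa using hx8
            subst hj
            have hnm : spikeTrace pP j ∉ Xs := by
              intro hmem
              exact hbad ⟨spikeTrace pP j, hmem, spikeTrace mP j, h8,
                .inl ⟨j, rfl⟩, .inr ⟨j, rfl⟩, ⟨j, by simp, by simp⟩, by simp, by simp⟩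
            simp [hnm]


/-! ### every model equals `TallSets13` -/

lemma satQ_unique {Q : Set (Set (Trace AP4))} {T : Set (Trace AP4)}
    (hQ : ∀ X : Set (Trace AP4), X ⊆ T → X ∈ Q) (h : SatQ Q T) : T = TallSets13 := by
  classical
  obtain ⟨t0, ht0, t1, ht1, H⟩ := h
  have hKey : ∀ t2 ∈ T, ∃ t3 ∈ T, (pP ∈ t0 0 ∧ xP ∈ t0 0) ∧ (mP ∈ t1 0 ∧ xP ∈ t1 0) ∧
      ShapeP t2 ∧ SuccP t2 t3 := by
    intro t2 ht2
    obtain ⟨t3, ht3, H2⟩ := H t2 ht2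
    obtain ⟨t5, h5, t6, h6, t7, h7, H3⟩ :=
      H2 {t2} (hQ _ (Set.singleton_subset_iff.2 ht2)) t2 rfl
    have hm := H3 t2 rfl
    exact ⟨t3, ht3, hm.1, hm.2.1, hm.2.2.1, hm.2.2.2.1⟩
  have hShape : ∀ t ∈ T, ShapeP t := by
    intro t ht
    obtain ⟨t3, -, hm⟩ := hKey t ht
    exact hm.2.2.1
  have hSucc : ∀ t ∈ T, ∃ t' ∈ T, SuccP t t' := by
    intro t ht
    obtain ⟨t3, ht3, hm⟩ := hKey t ht
    exact ⟨t3, ht3, hm.2.2.2⟩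
  obtain ⟨t3, -, hm0⟩ := hKey t0 ht0
  have hB0 : pP ∈ t0 0 ∧ xP ∈ t0 0 := hm0.1
  have hB1 : mP ∈ t1 0 ∧ xP ∈ t1 0 := hm0.2.1
  -- all positive spikes belong to T
  have hspikeP : ∀ n, spikeTrace pP n ∈ T := by
    intro n
    induction n with
    | zero =>
      obtain ⟨n0, he⟩ := shape_pP (hShape t0 ht0) hB0.1
      have h0 : (0 : ℕ) = n0 := by rw [he] at hB0; simpa using hB0.2
      rw [h0]
      exact he ▸ ht0
    | succ n ih =>
      obtain ⟨t', ht', hS⟩ := hSucc _ ih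
      obtain ⟨hp3, j, hj2, hj3⟩ := hS.1 (by simp)
      have hj : j = n := by simpa using hj2
      subst hj
      obtain ⟨m, hmeq⟩ := shape_pP (hShape t' ht') hp3
      have hjm : j + 1 = m := by rw [hmeq] at hj3; simpa using hj3
      rw [hjm]
      exact hmeq ▸ ht'
  have hspikeM : ∀ n, spikeTrace mP n ∈ T := by
    intro n
    induction n with
    | zero =>
      obtain ⟨n0, he⟩ := shape_mP (hShape t1 ht1) hB1.1
      have h0 : (0 : ℕ) = n0 := by rw [he] at hB1; simpa using hB1.2
      rw [h0]
      exact he ▸ ht1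
    | succ n ih =>
      obtain ⟨t', ht', hS⟩ := hSucc _ ih
      obtain ⟨hp3, j, hj2, hj3⟩ := hS.2 (by simp)
      have hj : j = n := by simpa using hj2
      subst hj
      obtain ⟨m, hmeq⟩ := shape_mP (hShape t' ht') hp3
      have hjm : j + 1 = m := by rw [hmeq] at hj3; simpa using hj3
      rw [hjm]
      exact hmeq ▸ ht'
  -- all `s`-traces belong to T
  have hstr : ∀ t : Trace AP4, IsS t → t ∈ T := by
    intro t hIsS
    set XA : Set (Trace AP4) :=
      {u | (∃ n, xP ∈ t n ∧ u = spikeTrace pP n) ∨ (∃ n, xP ∉ t n ∧ u = spikeTrace mP n)}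
      with hXAdef
    have hXAsub : XA ⊆ T := by
      rintro u (⟨n, -, rfl⟩ | ⟨n, -, rfl⟩)
      exacts [hspikeP n, hspikeM n]
    obtain ⟨t3, ht3, H2⟩ := H t0 ht0
    have ht4 : ∃ t4, t4 ∈ XA := by
      by_cases h0 : xP ∈ t 0
      · exact ⟨spikeTrace pP 0, .inl ⟨0, h0, rfl⟩⟩
      · exact ⟨spikeTrace mP 0, .inr ⟨0, h0, rfl⟩⟩
    obtain ⟨t4, ht4⟩ := ht4
    obtain ⟨t5, h5, t6, h6, t7, h7, H3⟩ := H2 XA (hQ XA hXAsub) t4 ht4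
    have hnb : ¬ BadP t5 t6 := by
      rintro ⟨-, -, ⟨j, hj5, hj6⟩, hp5, hm6⟩
      rcases h5 with ⟨n5, hn5, rfl⟩ | ⟨n5, hn5, rfl⟩
      · rcases h6 with ⟨n6, hn6, rfl⟩ | ⟨n6, hn6, rfl⟩
        · simpa using hm6
        · have e5 : j = n5 := by simpa using hj5
          have e6 : j = n6 := by simpa using hj6
          exact hn6 (e6 ▸ e5 ▸ hn5)
      · simpa using hp5
    have hmatch : ∀ t8 ∈ XA, MatchP t7 t8 :=
      fun t8 h8 => ((H3 t8 h8).2.2.2.2).resolve_left hnb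
    have hs7 : sP ∈ t7 0 := (hmatch t4 ht4).1
    have hIsS7 : IsS t7 := shape_sP (hShape t7 h7) hs7
    have heq : t7 = t := by
      funext k
      by_cases hk : xP ∈ t k
      · have h8 := (hmatch (spikeTrace pP k) (.inl ⟨k, hk, rfl⟩)).2 (.inl ⟨k, rfl⟩)
        have hx7 : xP ∈ t7 k := h8.1 (by simp) k (by simp)
        have e1 : t7 k = {sP, xP} := by
          rcases hIsS7 k with h | h
          · rw [h] at hx7; simp at hx7
          · exact h
        have e2 : t k = {sP, xP} := by
          rcases hIsS k with h | h
          · rw [h] at hk; simp at hk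
          · exact h
        rw [e1, e2]
      · have h8 := (hmatch (spikeTrace mP k) (.inr ⟨k, hk, rfl⟩)).2 (.inr ⟨k, rfl⟩)
        have hx7 : xP ∉ t7 k := h8.2 (by simp) k (by simp)
        have e1 : t7 k = {sP} := by
          rcases hIsS7 k with h | h
          · exact h
          · rw [h] at hx7; simp at hx7
        have e2 : t k = {sP} := by
          rcases hIsS k with h | h
          · exact h
          · rw [h] at hk; simp at hk
        rw [e1, e2]
    exact heq ▸ h7
  ext t
  constructor
  · intro ht
    exact mem_tall.2 (hShape t ht)
  · intro ht
    rcases mem_tall.1 ht with (⟨n, rfl⟩ | ⟨n, rfl⟩) | hs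
    exacts [hspikeP n, hspikeM n, hstr t hs]


/-! ### syntactic side conditions -/

lemma phi_sentence : (phi).IsSentence := by
  constructor
  · ext n
    simp only [phi, Formula.freeTraceVars, matF, baseF, shapeF, sh, shP, shM, shS, oneX,
      succF, fstep, badF, matchF, qand, qimp, qF, qG, tt, QF.traceVars,
      Set.mem_union, Set.mem_diff, Set.mem_singleton_iff, Set.mem_empty_iff_false,
      iff_false]
    omega
  · intro X hX
    simp only [phi, Formula.freeSetVars, Set.mem_diff, Set.mem_insert_iff,
      Set.mem_singleton_iff, Set.mem_empty_iff_false] at hX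
    simp only [Set.mem_insert_iff, Set.mem_singleton_iff]
    tauto

lemma phi_xafree : (phi).XaFree := by
  simp [phi, Formula.XaFree]


/-! ### cardinality -/

/-- The injection of `Set ℕ` into the `s`-traces. -/
noncomputable def sTrace (A : Set ℕ) : Trace AP4 := by
  classical
  exact fun k => if k ∈ A then ({sP, xP} : Set AP4) else {sP}

lemma sTrace_mem (A : Set ℕ) : sTrace A ∈ TallSets13 := by
  refine mem_tall.2 (.inr fun k => ?_)
  by_cases h : k ∈ A <;> simp [sTrace, h]

lemma sTrace_inj : Function.Injective sTrace := by
  intro A B hAB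
  ext k
  by_cases hA : k ∈ A <;> by_cases hB : k ∈ B
  · exact iff_of_true hA hB
  · exfalso
    have := congrFun hAB k
    rw [show sTrace A k = {sP, xP} from by simp [sTrace, hA],
      show sTrace B k = {sP} from by simp [sTrace, hB]] at this
    have : xP ∈ ({sP} : Set AP4) := this ▸ xP_mem_sxS
    simp at this
  · exfalso
    have := congrFun hAB k
    rw [show sTrace A k = {sP} from by simp [sTrace, hA],
      show sTrace B k = {sP, xP} from by simp [sTrace, hB]] at this
    have : xP ∈ ({sP} : Set AP4) := this.symm ▸ xP_mem_sxS
    simp at this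
  · exact iff_of_false hA hB

lemma mk_tall : Cardinal.mk TallSets13 = Cardinal.continuum := by
  apply le_antisymm
  · calc Cardinal.mk TallSets13 ≤ Cardinal.mk (Trace AP4) := Cardinal.mk_set_le _
      _ ≤ Cardinal.continuum := by
        have h1 : Cardinal.mk (Trace AP4) = Cardinal.mk (Set AP4) ^ Cardinal.aleph0 := by
          simp [Cardinal.mk_arrow]
        have h16 : Cardinal.mk (Set AP4) = 16 := by
          rw [Cardinal.mk_set]
          simp
          have : ((4:ℕ) : Cardinal) = (4 : Cardinal) := by norm_num
          rw [← this, Cardinal.power_natCast]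
          norm_num
        have h2 : (16 : Cardinal) ^ Cardinal.aleph0 = 2 ^ Cardinal.aleph0 := by
          have e : (16 : Cardinal) = 2 ^ (4 : Cardinal) := by
            have : ((4:ℕ) : Cardinal) = (4 : Cardinal) := by norm_num
            rw [← this, Cardinal.power_natCast]
            norm_num
          rw [e, ← Cardinal.power_mul]
          congr 1
          exact Cardinal.nat_mul_aleph0 (by norm_num)
        rw [h1, h16, h2, Cardinal.two_power_aleph0]
  · have : Cardinal.mk (Set ℕ) ≤ Cardinal.mk TallSets13 :=
      Cardinal.mk_le_of_injective (f := fun A => (⟨sTrace A, sTrace_mem A⟩ : TallSets13))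
        (fun A B hAB => sTrace_inj (congrArg Subtype.val hAB))
    rwa [Cardinal.mk_set, Cardinal.mk_nat, Cardinal.two_power_aleph0] at this

/-- There is a satisfiable `Xₐ`-free Hyper²LTL sentence all of whose
models have cardinality exactly `𝔠`, under both standard and closed-world semantics;
concretely, over `AP = {+, −, s, x}` there is a sentence whose unique model under both
semantics is the uncountable set `TallSets13`. -/
theorem exists_sentence_with_unique_continuum_model :
    ∃ φ : Formula AP4, φ.IsSentence ∧ φ.XaFree ∧
      (∃ T : Set (Trace AP4), Models T φ) ∧
      (∀ T : Set (Trace AP4), Models T φ ↔ T = TallSets13) ∧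
      (∀ T : Set (Trace AP4), ModelsCW T φ ↔ T = TallSets13) ∧
      (∀ T : Set (Trace AP4), Models T φ → Cardinal.mk T = Cardinal.continuum) ∧
      (∀ T : Set (Trace AP4), ModelsCW T φ → Cardinal.mk T = Cardinal.continuum) := by
  have hstd : ∀ T : Set (Trace AP4), Models T phi ↔ T = TallSets13 := by
    intro T
    constructor
    · intro h
      exact satQ_unique (fun X _ => Set.mem_univ X) (models_iff.1 h)
    · rintro rfl
      exact models_iff.2 (satQ_tall _)
  have hcw : ∀ T : Set (Trace AP4), ModelsCW T phi ↔ T = TallSets13 := by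
    intro T
    constructor
    · intro h
      exact satQ_unique (fun X hX => hX) (modelsCW_iff.1 h)
    · rintro rfl
      exact modelsCW_iff.2 (satQ_tall _)
  refine ⟨phi, phi_sentence, phi_xafree, ⟨TallSets13, (hstd _).2 rfl⟩, hstd, hcw, ?_, ?_⟩
  · intro T h
    rw [(hstd T).1 h]
    exact mk_tall
  · intro T h
    rw [(hcw T).1 h]
    exact mk_tall

end Hyper2
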